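/- Consider the i.i.d. random environment on ℤ^d, d ≥ 2, with marginal defined as follows: let T be a random variable with 0 < T ≤ 1/2 a.s. and 𝐏[T^{−1} ≥ n] ≥ c n^{−1/2^d} for all n ≥ 1 and some c > 0, let B_0 be an independent random set uniform over the 2^d orthonormal bases {σ_1 e_1,…,σ_d e_d}, σ_i ∈ {−1,+1}, of ℤ^d, and set p^ω(0,e_i) = T/d if e_i ∈ B_0 and p^ω(0,e_i) = 1/d − T/d if e_i ∉ B_0, for all i ∈ {1,…,2d}. Then 𝐏[min_{x∈𝔥} 1/T^{(x)} ≥ n] = 𝐏[T^{−1} ≥ n]^{2^d} ≥ c' n^{−1} for the i.i.d. copies (T^{(x)})_{x∈𝔥} attached to the sites of the unit hypercube, and the annealed expected exit time of the unit hypercube is infinite: 𝔼[T^ex_𝔥] = ∞. -/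

import Mathlib

open MeasureTheory ProbabilityTheory Filter Topology ENNReal
open scoped Classical

noncomputable section

namespace RWRE

/-- Sites of `ℤ^d`. -/
abbrev V (d : ℕ) := Fin d → ℤ

/-- The `2d` directions: `(i, true)` is `e_i`, `(i, false)` is `-e_i`. -/
abbrev Dir (d : ℕ) := Fin d × Bool

/-- Trajectory space. -/
abbrev Traj (d : ℕ) := ℕ → V d

/-- The unit vector associated to a direction. -/
def dirVec (d : ℕ) (e : Dir d) : V d := fun i => if i = e.1 then (if e.2 then 1 else -1) else 0

/-- Probability vectors on the set of directions. -/
abbrev ProbVec (d : ℕ) := {p : Dir d → ℝ // (∀ e, 0 ≤ p e) ∧ ∑ e, p e = 1}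

/-- Environments. -/
abbrev Env (d : ℕ) := V d → ProbVec d

/-- Transition probability at site `x` in direction `e`. -/
def pmf {d : ℕ} (ω : Env d) (x : V d) (e : Dir d) : ℝ := (ω x).1 e

/-- Transition probability from `x` to `y` (zero if `y` is not a neighbour of `x`). -/
def stepProb {d : ℕ} (ω : Env d) (x y : V d) : ℝ :=
  ∑ e : Dir d, if y = x + dirVec d e then pmf ω x e else 0

/-- `P` is the family of quenched laws: `P ω x` is the law of the Markov chain started at `x`
with transition probabilities given by `ω`. -/
def IsQuenched {d : ℕ} (P : Env d → V d → Measure (Traj d)) : Prop :=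
  (∀ ω x, IsProbabilityMeasure (P ω x)) ∧
  (∀ x, Measurable fun ω => P ω x) ∧
  ∀ ω x (n : ℕ) (γ : ℕ → V d),
    (P ω x {X | ∀ k ≤ n, X k = γ k}).toReal
      = (if γ 0 = x then 1 else 0) * ∏ k ∈ Finset.range n, stepProb ω (γ k) (γ (k + 1))

/-- The annealed law `ℙ_x`. -/
def annealed {d : ℕ} (P : Env d → V d → Measure (Traj d)) (Pr : Measure (Env d)) (x : V d) :
    Measure (Traj d) := Pr.bind fun ω => P ω x

/-- The environment law is i.i.d. -/
def IsIID {d : ℕ} (Pr : Measure (Env d)) : Prop :=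
  IsProbabilityMeasure Pr ∧
  iIndepFun (fun x ω => ω x) Pr ∧
  ∀ x : V d, Pr.map (fun ω => ω x) = Pr.map (fun ω => ω 0)

/-- Ellipticity. -/
def Elliptic {d : ℕ} (Pr : Measure (Env d)) : Prop :=
  ∀ᵐ ω ∂Pr, ∀ x e, 0 < pmf ω x e

/-- Exit time of a set. -/
def exitTime {d : ℕ} (A : Set (V d)) (X : Traj d) : ℕ∞ :=
  ⨅ (n : ℕ) (_ : X n ∉ A), (n : ℕ∞)

/-- Hitting time of a set. -/
def hitTime {d : ℕ} (A : Set (V d)) (X : Traj d) : ℕ∞ :=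
  ⨅ (n : ℕ) (_ : X n ∈ A), (n : ℕ∞)

/-- Positive hitting time of a set. -/
def retTime {d : ℕ} (A : Set (V d)) (X : Traj d) : ℕ∞ :=
  ⨅ (n : ℕ) (_ : 1 ≤ n ∧ X n ∈ A), (n : ℕ∞)

/-- Scalar product of `ℓ ∈ ℝ^d` with a site of `ℤ^d`. -/
def dot {d : ℕ} (ℓ : Fin d → ℝ) (x : V d) : ℝ := ∑ i, ℓ i * (x i : ℝ)

/-- `ℓ` belongs to the unit sphere `S^{d-1}`. -/
def UnitVec {d : ℕ} (ℓ : Fin d → ℝ) : Prop := ∑ i, ℓ i ^ 2 = 1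

/-- The walk, under the annealed law, is transient in the direction `ℓ`. -/
def Transient {d : ℕ} (P : Env d → V d → Measure (Traj d)) (Pr : Measure (Env d))
    (ℓ : Fin d → ℝ) : Prop :=
  annealed P Pr 0 {X | Tendsto (fun n => dot ℓ (X n)) atTop atTop} = 1

/-- The trajectory rescaled to `ℝ^d`. -/
def toR {d : ℕ} (x : V d) : Fin d → ℝ := fun i => (x i : ℝ)

/-- The unit hypercube based at `x`. -/
def cube {d : ℕ} (x : V d) : Set (V d) := {y | ∀ i, y i = x i ∨ y i = x i + 1}

/-- The corners of the unit hypercube based at `0`, as a finite set. -/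
def cubePts (d : ℕ) : Finset (V d) :=
  Finset.univ.image fun s : Fin d → Bool => (fun i => if s i then 1 else 0 : V d)

/-- The (outer) boundary of a set of sites. -/
def bdry {d : ℕ} (A : Set (V d)) : Set (V d) :=
  {z | z ∉ A ∧ ∃ w ∈ A, ∑ i, |z i - w i| = 1}

/-- The boundary points adjacent to `y`. -/
def bdryAt {d : ℕ} (y : V d) (A : Set (V d)) : Set (V d) :=
  {z | z ∈ bdry A ∧ ∑ i, |z i - y i| = 1}

/-- `Q^C_y`: the largest transition probability leading out of `C` from `y`. -/
def Qmax {d : ℕ} (ω : Env d) (C : Set (V d)) (y : V d) : ℝ :=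
  ⨆ e : Dir d, if y + dirVec d e ∈ bdryAt y C then pmf ω y e else 0

/-- The event that the walk exits `C` through a neighbour of `y` before returning to `x`. -/
def exitVia {d : ℕ} (C : Set (V d)) (x y : V d) : Set (Traj d) :=
  {X | ∃ n : ℕ, X n ∈ bdryAt y C ∧ (∀ m < n, X m ∉ bdry C) ∧ ∀ m, 1 ≤ m → m < n → X m ≠ x}

/-- `Q̃^C_{x,y}`: the quenched probability, starting from `x`, of exiting `C` through a
neighbour of `y` before returning to `x`. -/
def Qtilde {d : ℕ} (P : Env d → V d → Measure (Traj d)) (ω : Env d) (C : Set (V d))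
    (x y : V d) : ℝ := ((P ω x) (exitVia C x y)).toReal

/-- A marked Markovian hypercube: a unit hypercube containing `0` discovered in a Markovian
fashion by revealing sites `f 0 = 0, f 1, ...` one at a time, together with marks. -/
structure MMH (d : ℕ) where
  /-- The successively revealed sites. -/
  f : ℕ → Env d → V d
  /-- The marks, indexed by the corners of the unit hypercube at `0`. -/
  mark : V d → Env d → ℝ
  /-- The base point `x₀(ω)` of the revealed hypercube. -/
  x0 : Env d → V d
  f_zero : ∀ ω, f 0 ω = 0
  f_meas : ∀ i, Measurable (f i)
  f_local : ∀ i (ω ω' : Env d), (∀ j ≤ i, ω' (f j ω) = ω (f j ω)) → f (i + 1) ω' = f (i + 1) ω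
  f_adj : ∀ i ω, i + 1 < 2 ^ d → f (i + 1) ω ∈ bdry {y | ∃ j ≤ i, f j ω = y}
  x0_cube : ∀ ω, cube (x0 ω) = {y | ∃ j < 2 ^ d, f j ω = y}
  mark_nonneg : ∀ x ω, 0 ≤ mark x ω
  mark_meas : ∀ x, Measurable (mark x)
  mark_local : ∀ x (ω ω' : Env d), (∀ y ∈ cube (x0 ω), ω' y = ω y) → mark x ω' = mark x ω

/-- Condition `(K)_α` with explicit constant `ε` (parts (1), (2), (3)). -/
def CondKE {d : ℕ} (P : Env d → V d → Measure (Traj d)) (Pr : Measure (Env d))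
    (α ε : ℝ) : Prop :=
  ∃ γ : V d → ℝ, (∀ x, 0 ≤ γ x) ∧
    (∀ x ∈ cubePts d, ∫⁻ ω, (ENNReal.ofReal (Qmax ω (cube 0) x)) ^ (-(γ x)) ∂Pr < ⊤) ∧
    ∃ H : MMH d,
      (∫⁻ ω, ∏ x ∈ cubePts d,
          (ENNReal.ofReal (Qtilde P ω (cube (H.x0 ω)) 0 (H.x0 ω + x))) ^ (-(H.mark x ω)) ∂Pr
        < ⊤) ∧
      ∀ᵐ ω ∂Pr, α + ε ≤ ∑ x ∈ cubePts d, min (γ x) (H.mark x ω)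

/-- Condition `(K)_α`. -/
def CondK {d : ℕ} (P : Env d → V d → Measure (Traj d)) (Pr : Measure (Env d)) (α : ℝ) : Prop :=
  ∃ ε > (0 : ℝ), CondKE P Pr α ε

/-- Condition `(E)_0`. -/
def CondE0 {d : ℕ} (Pr : Measure (Env d)) : Prop :=
  ∀ e : Dir d, ∃ η > (0 : ℝ), ∫⁻ ω, (ENNReal.ofReal (pmf ω 0 e)) ^ (-η) ∂Pr < ⊤

/-- The coordinates of `z ∈ ℤ^d` in the rotated frame `R`. -/
def tiltCoord {d : ℕ} (R : EuclideanSpace ℝ (Fin d) ≃ₗᵢ[ℝ] EuclideanSpace ℝ (Fin d))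
    (z : V d) : Fin d → ℝ :=
  WithLp.equiv 2 (Fin d → ℝ) (R.symm ((WithLp.equiv 2 (Fin d → ℝ)).symm fun j => (z j : ℝ)))

/-- The box `B^ℓ_{L,L',L̃}`: the image under the rotation `R` of
`(-L',L) × (-L̃,L̃)^{d-1}`, intersected with `ℤ^d`. -/
def polyBox {d : ℕ} (R : EuclideanSpace ℝ (Fin d) ≃ₗᵢ[ℝ] EuclideanSpace ℝ (Fin d))
    (L L' Lt : ℝ) : Set (V d) :=
  {z | (∀ i : Fin d, (i : ℕ) = 0 → tiltCoord R z i ∈ Set.Ioo (-L') L) ∧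
       ∀ i : Fin d, (i : ℕ) ≠ 0 → tiltCoord R z i ∈ Set.Ioo (-Lt) Lt}

/-- The first coordinate vector of `ℝ^d` as an element of Euclidean space. -/
def euc1 (d : ℕ) : EuclideanSpace ℝ (Fin d) :=
  (WithLp.equiv 2 (Fin d → ℝ)).symm fun i => if (i : ℕ) = 0 then 1 else 0

/-- The polynomial condition `(P)^ℓ_M`. -/
def CondP {d : ℕ} (P : Env d → V d → Measure (Traj d)) (Pr : Measure (Env d))
    (ℓ : Fin d → ℝ) (M : ℝ) : Prop :=
  ∃ R : EuclideanSpace ℝ (Fin d) ≃ₗᵢ[ℝ] EuclideanSpace ℝ (Fin d),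
    R (euc1 d) = (WithLp.equiv 2 (Fin d → ℝ)).symm ℓ ∧
    ∀ L : ℝ, 2 / 3 * 3 ^ (29 * d) ≤ L →
      ∃ L' ≤ 5 / 4 * L, ∃ Lt ≤ 72 * L ^ 3,
        annealed P Pr 0
          {X | ∃ n, X n ∉ polyBox R L L' Lt ∧ (∀ m < n, X m ∈ polyBox R L L' Lt) ∧
                dot ℓ (X n) < L}
          ≤ ENNReal.ofReal (L ^ (-M))

/-- The backtracking time `D = inf{n ≥ 0 : X_n·ℓ < X_0·ℓ}`. -/
def Dtime {d : ℕ} (ℓ : Fin d → ℝ) (X : Traj d) : ℕ∞ :=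
  ⨅ (n : ℕ) (_ : dot ℓ (X n) < dot ℓ (X 0)), (n : ℕ∞)

/-- The triples `(S_k, R_k, M_k)` of the regeneration structure. -/
def regenAux {d : ℕ} (ℓ : Fin d → ℝ) (a : ℝ) (X : Traj d) : ℕ → ℕ∞ × ℕ∞ × EReal
  | 0 => (0, 0, ((dot ℓ (X 0) : ℝ) : EReal))
  | k + 1 =>
    let M := (regenAux ℓ a X k).2.2
    let S : ℕ∞ := ⨅ (n : ℕ) (_ : M + (a : EReal) < ((dot ℓ (X n) : ℝ) : EReal)), (n : ℕ∞)
    let R : ℕ∞ := ⨅ (n : ℕ) (_ : (n : ℕ∞) = S), (S + Dtime ℓ fun m => X (n + m))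
    (S, R, ⨆ (n : ℕ) (_ : (n : ℕ∞) ≤ R), ((dot ℓ (X n) : ℝ) : EReal))

/-- The first regeneration time `τ₁ = S_K`. -/
def tau1 {d : ℕ} (ℓ : Fin d → ℝ) (a : ℝ) (X : Traj d) : ℕ∞ :=
  ⨅ (k : ℕ) (_ : 1 ≤ k ∧ (regenAux ℓ a X k).1 ≠ ⊤ ∧ (regenAux ℓ a X k).2.1 = ⊤),
    (regenAux ℓ a X k).1

/-- The `ℓ¹` norm on `ℤ^d`. -/
def norm1 {d : ℕ} (x : V d) : ℤ := ∑ i, |x i|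

/-- `ℙ`-expectation, under the annealed law started at `x`, of `(T^ex_𝔥)^α`. -/
def cubeExitMoment {d : ℕ} (P : Env d → V d → Measure (Traj d)) (Pr : Measure (Env d))
    (x : V d) (α : ℝ) : ℝ≥0∞ :=
  ∫⁻ X, ((exitTime (cube 0) X : ℝ≥0∞)) ^ α ∂(annealed P Pr x)

/-- The uniform probability measure on sign patterns (i.e. on the `2^d` orthonormal bases
`{σ₁e₁, …, σ_d e_d}` of `ℤ^d`). -/
def uniformSigns (d : ℕ) : Measure (Fin d → Bool) :=
  ((2 ^ d : ℝ≥0∞))⁻¹ • ∑ σ : Fin d → Bool, Measure.dirac σ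

/-- The transition vector of the symmetric example environment as a function of `(T, B₀)`:
direction `e` gets probability `T/d` if `e ∈ B₀` and `1/d - T/d` otherwise. -/
def psym (d : ℕ) (ts : ℝ × (Fin d → Bool)) : Dir d → ℝ := fun e =>
  if e.2 = ts.2 e.1 then ts.1 / d else 1 / d - ts.1 / d

/-- The law `Pr` is the i.i.d. environment whose common site marginal is the law of
`psym (T, B₀)`, where `0 < T ≤ 1/2` a.s., `𝐏[T⁻¹ ≥ n] ≥ c n^{-1/2^d}`, and `B₀` is an
independent uniform sign pattern. -/
def IsPsym {d : ℕ} (Pr : Measure (Env d)) : Prop :=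
  IsIID Pr ∧
  ∃ μT : Measure ℝ, IsProbabilityMeasure μT ∧
    μT {t | 0 < t ∧ t ≤ 1 / 2} = 1 ∧
    (∃ c > (0 : ℝ), ∀ n : ℕ, 1 ≤ n →
      ENNReal.ofReal (c * (n : ℝ) ^ (-(1 : ℝ) / 2 ^ d)) ≤ μT {t | (n : ℝ) ≤ t⁻¹}) ∧
    Pr.map (fun ω => ((ω 0).1 : Dir d → ℝ))
      = (μT.prod (uniformSigns d)).map (fun ts => psym d ts)

/-- The value of the variable `T` at the site `x`, recovered from the environment:
`T^{(x)} = d · min_e p^ω(x,e)`. -/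
def Tval {d : ℕ} (ω : Env d) (x : V d) : ℝ := d * ⨅ e : Dir d, pmf ω x e

section Aux
variable {d : ℕ}

lemma dirVec_inj (d : ℕ) : Function.Injective (dirVec d) := by
  rintro ⟨i, b⟩ ⟨j, c⟩ h
  have hi := congrFun h i
  simp only [dirVec] at hi
  by_cases hij : i = j
  · subst hij; cases b <;> cases c <;> simp_all
  · rw [if_neg hij] at hi
    cases b <;> simp_all

lemma mem_cube_zero {y : V d} : y ∈ cube (0 : V d) ↔ ∀ i, y i = 0 ∨ y i = 1 := by
  simp [cube]

lemma zero_mem_cube : (0 : V d) ∈ cube (0 : V d) :=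
  mem_cube_zero.mpr fun i => Or.inl rfl

lemma coe_cubePts : (cubePts d : Set (V d)) = cube 0 := by
  ext y
  simp only [cubePts, Finset.coe_image, Finset.coe_univ, Set.image_univ, Set.mem_range,
    mem_cube_zero]
  constructor
  · rintro ⟨s, rfl⟩ i; by_cases h : s i <;> simp [h]
  · intro h
    refine ⟨fun i => decide (y i = 1), funext fun i => ?_⟩
    rcases h i with h0 | h1
    · simp [h0]
    · simp [h1]

lemma card_cubePts : (cubePts d).card = 2 ^ d := by
  rw [cubePts, Finset.card_image_of_injective _ ?_, Finset.card_univ]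
  · simp
  · intro s t h
    funext i
    have := congrFun h i
    cases hs : s i <;> cases ht : t i <;> simp_all

def inDirs (x : V d) : Finset (Dir d) :=
  Finset.univ.filter fun e => x + dirVec d e ∈ cube (0 : V d)

lemma mem_inDirs_of_mem {x : V d} {e : Dir d} (he : e ∈ inDirs x) :
    x + dirVec d e ∈ cube (0 : V d) := (Finset.mem_filter.mp he).2

lemma mem_inDirs {x : V d} (hx : x ∈ cube (0 : V d)) {e : Dir d} :
    e ∈ inDirs x ↔ e.2 = decide (x e.1 = 0) := by
  obtain ⟨i, b⟩ := e
  rw [mem_cube_zero] at hx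
  simp only [inDirs, Finset.mem_filter, Finset.mem_univ, true_and, mem_cube_zero]
  constructor
  · intro h
    have h1 := h i
    have h2 := hx i
    simp only [Pi.add_apply, dirVec, if_pos rfl] at h1
    cases b <;> simp at h1 ⊢ <;> omega
  · intro hb j
    have h2 := hx j
    by_cases hji : j = i
    · subst hji
      simp only [Pi.add_apply, dirVec, if_pos rfl]
      cases b
      · replace hb : ¬ (x j = 0) := by simpa using hb.symm
        simp only [Bool.false_eq_true, if_false, if_true]
        omega
      · replace hb : x j = 0 := by simpa using hb.symm
        simp only [if_true]
        omega
    · simp only [Pi.add_apply, dirVec, if_neg hji, add_zero]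
      exact h2

lemma inDirs_eq_image {x : V d} (hx : x ∈ cube (0 : V d)) :
    inDirs x = Finset.univ.image fun i : Fin d => ((i, decide (x i = 0)) : Dir d) := by
  ext e
  rw [mem_inDirs hx, Finset.mem_image]
  constructor
  · intro h; exact ⟨e.1, Finset.mem_univ _, by rw [← h]⟩
  · rintro ⟨i, -, rfl⟩; rfl

def stayProb (ω : Env d) : ℕ → V d → ℝ
  | 0, _ => 1
  | n+1, x => ∑ e ∈ inDirs x, pmf ω x e * stayProb ω n (x + dirVec d e)

lemma pmf_nonneg (ω : Env d) (x : V d) (e : Dir d) : 0 ≤ pmf ω x e := (ω x).2.1 e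

lemma stayProb_nonneg (ω : Env d) : ∀ n x, 0 ≤ stayProb ω n x := by
  intro n
  induction n with
  | zero => intro x; norm_num [stayProb]
  | succ n ih =>
    intro x
    exact Finset.sum_nonneg fun e _ => mul_nonneg (pmf_nonneg ω x e) (ih _)

lemma le_stayProb (ω : Env d) {r : ℝ} (hr0 : 0 ≤ r)
    (h : ∀ x ∈ cube (0 : V d), r ≤ ∑ e ∈ inDirs x, pmf ω x e) :
    ∀ n, ∀ x ∈ cube (0 : V d), r ^ n ≤ stayProb ω n x := by
  intro n
  induction n with
  | zero => intro x _; simp [stayProb]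
  | succ n ih =>
    intro x hx
    have h1 : ∀ e ∈ inDirs x, pmf ω x e * r ^ n ≤ pmf ω x e * stayProb ω n (x + dirVec d e) :=
      fun e he => mul_le_mul_of_nonneg_left (ih _ (mem_inDirs_of_mem he)) (pmf_nonneg ω x e)
    calc r ^ (n+1) = r * r ^ n := by ring
    _ ≤ (∑ e ∈ inDirs x, pmf ω x e) * r ^ n :=
      mul_le_mul_of_nonneg_right (h x hx) (pow_nonneg hr0 n)
    _ = ∑ e ∈ inDirs x, pmf ω x e * r ^ n := by rw [Finset.sum_mul]
    _ ≤ _ := Finset.sum_le_sum h1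

def pathFn (x : V d) {n : ℕ} (es : Fin n → Dir d) (k : ℕ) : V d :=
  x + ∑ j ∈ Finset.univ.filter (fun j : Fin n => (j : ℕ) < k), dirVec d (es j)

lemma pathFn_zero (x : V d) {n : ℕ} (es : Fin n → Dir d) : pathFn x es 0 = x := by
  simp [pathFn]

lemma pathFn_succ (x : V d) {n : ℕ} (es : Fin n → Dir d) {k : ℕ} (hk : k < n) :
    pathFn x es (k+1) = pathFn x es k + dirVec d (es ⟨k, hk⟩) := by
  rw [pathFn, pathFn]
  have hfil : Finset.univ.filter (fun j : Fin n => (j : ℕ) < k + 1)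
      = insert (⟨k, hk⟩ : Fin n) (Finset.univ.filter (fun j : Fin n => (j : ℕ) < k)) := by
    ext j
    simp only [Finset.mem_filter, Finset.mem_univ, true_and, Finset.mem_insert, Fin.ext_iff]
    omega
  rw [hfil, Finset.sum_insert (by simp)]
  abel

lemma pathFn_cons (x : V d) {n : ℕ} (e : Dir d) (es : Fin n → Dir d) (k : ℕ) :
    pathFn x (Fin.cons e es) (k+1) = pathFn (x + dirVec d e) es k := by
  rw [pathFn, pathFn]
  have : ∑ j ∈ Finset.univ.filter (fun j : Fin (n+1) => (j : ℕ) < k + 1),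
        dirVec d ((Fin.cons e es : Fin (n+1) → Dir d) j)
      = dirVec d e + ∑ j ∈ Finset.univ.filter (fun j : Fin n => (j : ℕ) < k), dirVec d (es j) := by
    rw [Finset.sum_filter, Fin.sum_univ_succ, Finset.sum_filter]
    simp [Fin.cons_succ, Nat.succ_lt_succ_iff]
  rw [this]
  abel

def wgt (ω : Env d) (x : V d) {n : ℕ} (es : Fin n → Dir d) : ℝ :=
  ∏ k : Fin n, pmf ω (pathFn x es k) (es k)

def good (x : V d) {n : ℕ} (es : Fin n → Dir d) : Prop :=
  ∀ k ≤ n, pathFn x es k ∈ cube (0 : V d)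

lemma wgt_nonneg (ω : Env d) (x : V d) {n : ℕ} (es : Fin n → Dir d) : 0 ≤ wgt ω x es :=
  Finset.prod_nonneg fun k _ => pmf_nonneg _ _ _

lemma wgt_cons (ω : Env d) (x : V d) {n : ℕ} (e : Dir d) (es : Fin n → Dir d) :
    wgt ω x (Fin.cons e es) = pmf ω x e * wgt ω (x + dirVec d e) es := by
  rw [wgt, Fin.prod_univ_succ]
  congr 1
  · rw [Fin.cons_zero]
    congr 1
    exact pathFn_zero x _
  · apply Finset.prod_congr rfl
    intro k _
    rw [Fin.cons_succ]
    congr 1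
    show pathFn x (Fin.cons e es) ((k : ℕ) + 1) = _
    exact pathFn_cons x e es k

lemma good_cons (x : V d) {n : ℕ} (e : Dir d) (es : Fin n → Dir d) :
    good x (Fin.cons e es) ↔ x ∈ cube (0 : V d) ∧ good (x + dirVec d e) es := by
  constructor
  · intro h
    refine ⟨by simpa [pathFn_zero] using h 0 (Nat.zero_le _), fun k hk => ?_⟩
    have := h (k+1) (Nat.succ_le_succ hk)
    rwa [pathFn_cons] at this
  · rintro ⟨h0, h⟩ k hk
    match k with
    | 0 => simpa [pathFn_zero] using h0
    | (k+1) => rw [pathFn_cons]; exact h k (Nat.le_of_succ_le_succ hk)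

lemma sum_wgt (ω : Env d) : ∀ (n : ℕ) (x : V d), x ∈ cube (0 : V d) →
    ∑ es : Fin n → Dir d, (if good x es then wgt ω x es else 0) = stayProb ω n x := by
  intro n
  induction n with
  | zero =>
    intro x hx
    rw [show stayProb ω 0 x = 1 from rfl]
    rw [Fintype.sum_unique]
    rw [if_pos, wgt, Finset.univ_eq_empty, Finset.prod_empty]
    intro k hk
    interval_cases k
    simpa [pathFn_zero] using hx
  | succ n ih =>
    intro x hx
    have hre := Fintype.sum_equiv (Fin.consEquiv (fun _ : Fin (n+1) => Dir d))
      (fun p : Dir d × (Fin n → Dir d) =>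
        if good x (Fin.cons p.1 p.2) then wgt ω x (Fin.cons p.1 p.2) else 0)
      (fun es : Fin (n+1) → Dir d => if good x es then wgt ω x es else 0)
      (fun p => rfl)
    rw [← hre, Fintype.sum_prod_type]
    have hinner : ∀ e : Dir d,
        (∑ es : Fin n → Dir d, if good x (Fin.cons e es) then wgt ω x (Fin.cons e es) else 0)
        = pmf ω x e *
          (if x + dirVec d e ∈ cube (0 : V d) then stayProb ω n (x + dirVec d e) else 0) := by
      intro e
      by_cases hc : x + dirVec d e ∈ cube (0 : V d)
      · rw [if_pos hc, ← ih (x + dirVec d e) hc, Finset.mul_sum]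
        apply Finset.sum_congr rfl
        intro es _
        rw [good_cons, wgt_cons]
        by_cases hg : good (x + dirVec d e) es
        · rw [if_pos ⟨hx, hg⟩, if_pos hg]
        · rw [if_neg (fun h => hg h.2), if_neg hg, mul_zero]
      · rw [if_neg hc, mul_zero]
        apply Finset.sum_eq_zero
        intro es _
        rw [if_neg]
        rw [good_cons]
        rintro ⟨-, hg⟩
        exact hc (by simpa [pathFn_zero] using hg 0 (Nat.zero_le _))
    rw [Finset.sum_congr rfl (fun e _ => hinner e)]
    rw [show stayProb ω (n+1) x
        = ∑ e ∈ inDirs x, pmf ω x e * stayProb ω n (x + dirVec d e) from rfl]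
    rw [inDirs, Finset.sum_filter]
    apply Finset.sum_congr rfl
    intro e _
    by_cases hc : x + dirVec d e ∈ cube (0 : V d) <;> simp [hc]


lemma stepProb_dirVec (ω : Env d) (y : V d) (e : Dir d) :
    stepProb ω y (y + dirVec d e) = pmf ω y e := by
  rw [stepProb, Finset.sum_eq_single e]
  · rw [if_pos rfl]
  · intro e' _ hne
    rw [if_neg]
    intro h
    exact hne (dirVec_inj d (add_left_cancel h)).symm
  · intro h; exact absurd (Finset.mem_univ _) h

lemma measurableSet_V (s : Set (V d)) : MeasurableSet s :=
  (Set.to_countable s).measurableSet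

def cyl (x : V d) {n : ℕ} (es : Fin n → Dir d) : Set (Traj d) :=
  {X | ∀ k ≤ n, X k = pathFn x es k}

lemma measurableSet_cyl (x : V d) {n : ℕ} (es : Fin n → Dir d) :
    MeasurableSet (cyl x es) := by
  have : cyl x es = ⋂ (k : ℕ) (_ : k ≤ n), (fun X : Traj d => X k) ⁻¹' {pathFn x es k} := by
    ext X; simp [cyl, Set.mem_iInter]
  rw [this]
  exact MeasurableSet.iInter fun k => MeasurableSet.iInter fun _ =>
    measurable_pi_apply k (measurableSet_V _)

def stay (d : ℕ) (n : ℕ) : Set (Traj d) := {X | ∀ k ≤ n, X k ∈ cube (0 : V d)}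

lemma measurableSet_stay (n : ℕ) : MeasurableSet (stay d n) := by
  have : stay d n = ⋂ (k : ℕ) (_ : k ≤ n), (fun X : Traj d => X k) ⁻¹' cube (0 : V d) := by
    ext X; simp [stay, Set.mem_iInter]
  rw [this]
  exact MeasurableSet.iInter fun k => MeasurableSet.iInter fun _ =>
    measurable_pi_apply k (measurableSet_V _)

lemma quenched_cyl {P : Env d → V d → Measure (Traj d)} (hP : IsQuenched P)
    (ω : Env d) (x : V d) {n : ℕ} (es : Fin n → Dir d) :
    P ω x (cyl x es) = ENNReal.ofReal (wgt ω x es) := by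
  haveI := hP.1 ω x
  have hform := hP.2.2 ω x n (pathFn x es)
  have hprod : ∏ k ∈ Finset.range n, stepProb ω (pathFn x es k) (pathFn x es (k + 1))
      = wgt ω x es := by
    rw [← Fin.prod_univ_eq_prod_range
      (fun k => stepProb ω (pathFn x es k) (pathFn x es (k + 1))) n, wgt]
    apply Finset.prod_congr rfl
    intro k _
    rw [pathFn_succ x es k.isLt, Fin.eta, stepProb_dirVec]
  rw [if_pos (pathFn_zero x es), one_mul, hprod] at hform
  rw [show cyl x es = {X : Traj d | ∀ k ≤ n, X k = pathFn x es k} from rfl,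
    ← ENNReal.ofReal_toReal (measure_ne_top (P ω x) _), hform]

lemma quenched_stay {P : Env d → V d → Measure (Traj d)} (hP : IsQuenched P)
    (ω : Env d) (n : ℕ) {x : V d} (hx : x ∈ cube (0 : V d)) :
    ENNReal.ofReal (stayProb ω n x) ≤ P ω x (stay d n) := by
  haveI := hP.1 ω x
  rw [← sum_wgt ω n x hx, ← Finset.sum_filter,
    ENNReal.ofReal_sum_of_nonneg (fun es _ => wgt_nonneg ω x es)]
  have h2 : ∀ es ∈ Finset.univ.filter (fun es : Fin n → Dir d => good x es),
      ENNReal.ofReal (wgt ω x es) = P ω x (cyl x es) :=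
    fun es _ => (quenched_cyl hP ω x es).symm
  rw [Finset.sum_congr rfl h2, ← measure_biUnion_finset ?_ (fun es _ => measurableSet_cyl x es)]
  · apply measure_mono
    intro X hX
    simp only [Set.mem_iUnion] at hX
    obtain ⟨es, hes, hXc⟩ := hX
    intro k hk
    rw [hXc k hk]
    exact (Finset.mem_filter.mp hes).2 k hk
  · intro es hes es' hes' hne
    simp only [Function.onFun]
    rw [Set.disjoint_left]
    intro X hX hX'
    apply hne
    funext j
    have h1 : X ((j : ℕ) + 1) = pathFn x es ((j : ℕ) + 1) := hX _ (Nat.succ_le_of_lt j.isLt)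
    have h2 : X ((j : ℕ) + 1) = pathFn x es' ((j : ℕ) + 1) := hX' _ (Nat.succ_le_of_lt j.isLt)
    have h3 : X (j : ℕ) = pathFn x es (j : ℕ) := hX _ (le_of_lt j.isLt)
    have h4 : X (j : ℕ) = pathFn x es' (j : ℕ) := hX' _ (le_of_lt j.isLt)
    rw [pathFn_succ x es j.isLt, Fin.eta] at h1
    rw [pathFn_succ x es' j.isLt, Fin.eta] at h2
    apply dirVec_inj d
    have := h1.symm.trans h2
    rw [← h3, ← h4] at this
    exact add_left_cancel this


lemma tsum_ite_le (g : ℝ≥0∞) (p : ℕ → Prop) (h : ∀ n, p n → ((n : ℝ≥0∞) + 1) ≤ g) :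
    ∑' n, (if p n then (1 : ℝ≥0∞) else 0) ≤ g := by
  have key : ∀ N, ∑ n ∈ Finset.range N, (if p n then (1 : ℝ≥0∞) else 0) ≤ g := by
    intro N
    induction N with
    | zero => simp
    | succ N ih =>
      by_cases hN : p N
      · calc ∑ n ∈ Finset.range (N+1), (if p n then (1 : ℝ≥0∞) else 0)
            ≤ ∑ _n ∈ Finset.range (N+1), 1 :=
              Finset.sum_le_sum (fun i _ => by split <;> simp)
        _ = ((N : ℝ≥0∞) + 1) := by simp [Finset.sum_const, Finset.card_range]
        _ ≤ g := h N hN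
      · rw [Finset.sum_range_succ, if_neg hN, add_zero]; exact ih
  rw [ENNReal.tsum_eq_iSup_sum]
  refine iSup_le fun s => ?_
  obtain ⟨N, hN⟩ := s.exists_nat_subset_range
  exact (Finset.sum_le_sum_of_subset hN).trans (key N)

lemma stay_le_exit (X : Traj d) :
    ∑' n, (if X ∈ stay d n then (1 : ℝ≥0∞) else 0) ≤ ((exitTime (cube 0) X : ℝ≥0∞)) := by
  apply tsum_ite_le
  intro n hn
  have h1 : ((n : ℕ∞) + 1) ≤ exitTime (cube 0) X := by
    rw [exitTime]
    refine le_iInf fun m => le_iInf fun hm => ?_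
    have hnm : n < m := by
      by_contra hcon
      exact hm (hn m (le_of_not_gt hcon))
    exact_mod_cast Nat.succ_le_of_lt hnm
  calc ((n : ℝ≥0∞) + 1) = (((n : ℕ∞) + 1 : ℕ∞) : ℝ≥0∞) := by
        rw [ENat.toENNReal_add, ENat.toENNReal_coe, ENat.toENNReal_one]
  _ ≤ _ := ENat.toENNReal_le.mpr h1

lemma tsum_inv_succ_eq_top : ∑' (n : ℕ), ENNReal.ofReal ((n + 1 : ℝ))⁻¹ = ⊤ := by
  by_contra h
  have hs : Summable (fun n : ℕ => ((n + 1 : ℝ))⁻¹) := by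
    have := ENNReal.summable_toReal h
    refine this.congr fun n => ?_
    rw [ENNReal.toReal_ofReal (by positivity)]
  have h2 : Summable (fun n : ℕ => 1 / ((n : ℝ) + 1)) := by simpa [one_div] using hs
  have h3 : Summable (fun n : ℕ => 1 / ((n + 1 : ℕ) : ℝ)) := h2.congr fun n => by push_cast; ring
  exact Real.not_summable_one_div_natCast
    ((summable_nat_add_iff (f := fun n : ℕ => 1 / (n : ℝ)) 1).mp h3)

lemma us_apply (s : Set (Fin d → Bool)) :
    uniformSigns d s = (2 ^ d : ℝ≥0∞)⁻¹ * ∑ σ : Fin d → Bool, s.indicator 1 σ := by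
  rw [uniformSigns, Measure.smul_apply, smul_eq_mul]
  congr 1
  rw [Measure.finset_sum_apply]
  exact Finset.sum_congr rfl fun σ _ => Measure.dirac_apply σ s

lemma two_pow_ne_zero : (2 ^ d : ℝ≥0∞) ≠ 0 := by positivity

lemma two_pow_ne_top : (2 ^ d : ℝ≥0∞) ≠ ⊤ := by
  exact ENNReal.pow_ne_top (by norm_num)

lemma us_univ : uniformSigns d Set.univ = 1 := by
  rw [us_apply]
  simp only [Set.indicator_univ, Pi.one_apply, Finset.sum_const, Finset.card_univ, nsmul_eq_mul,
    mul_one]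
  rw [Fintype.card_fun]
  simp only [Fintype.card_bool, Fintype.card_fin]
  rw [Nat.cast_pow, Nat.cast_ofNat]
  exact ENNReal.inv_mul_cancel two_pow_ne_zero two_pow_ne_top

instance : IsProbabilityMeasure (uniformSigns d) := ⟨us_univ⟩

lemma us_singleton (s0 : Fin d → Bool) : uniformSigns d {s0} = (2 ^ d : ℝ≥0∞)⁻¹ := by
  rw [us_apply, Finset.sum_eq_single s0]
  · simp
  · intro σ _ hne
    simp [Set.indicator_apply, hne]
  · intro h; exact absurd (Finset.mem_univ _) h

lemma meas_psym : Measurable (psym d) := by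
  rw [measurable_pi_iff]
  intro e
  apply Measurable.ite
  · exact ((measurable_pi_apply e.1).comp measurable_snd)
      ((Set.to_countable {b : Bool | e.2 = b}).measurableSet)
  · exact measurable_fst.div_const _
  · exact measurable_const.sub (measurable_fst.div_const _)

lemma meas_eval (x : V d) : Measurable fun ω : Env d => ω x := measurable_pi_apply x

lemma indep_prod {Pr : Measure (Env d)} (hPr : IsIID Pr) (B : V d → Set (ProbVec d))
    (hB : ∀ x, MeasurableSet (B x)) :
    Pr (⋂ x ∈ cubePts d, (fun ω : Env d => ω x) ⁻¹' (B x))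
      = ∏ x ∈ cubePts d, Pr ((fun ω : Env d => ω x) ⁻¹' (B x)) :=
  (iIndepFun_iff_measure_inter_preimage_eq_mul.mp hPr.2.1) (cubePts d) (fun x _ => hB x)

lemma marginal_eq {Pr : Measure (Env d)} (hPr : IsIID Pr) (x : V d) {B : Set (ProbVec d)}
    (hB : MeasurableSet B) :
    Pr ((fun ω : Env d => ω x) ⁻¹' B) = Pr ((fun ω : Env d => ω 0) ⁻¹' B) := by
  calc Pr ((fun ω : Env d => ω x) ⁻¹' B) = Pr.map (fun ω => ω x) B :=
        (Measure.map_apply (meas_eval x) hB).symm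
  _ = Pr.map (fun ω => ω 0) B := by rw [hPr.2.2 x]
  _ = _ := Measure.map_apply (meas_eval 0) hB


lemma marginal_val {Pr : Measure (Env d)} {μT : Measure ℝ}
    (hmap : Pr.map (fun ω => ((ω 0).1 : Dir d → ℝ))
      = (μT.prod (uniformSigns d)).map (fun ts => psym d ts))
    {C : Set (Dir d → ℝ)} (hC : MeasurableSet C) :
    Pr ((fun ω : Env d => ω 0) ⁻¹' (Subtype.val ⁻¹' C))
      = (μT.prod (uniformSigns d)) (psym d ⁻¹' C) := by
  have hm : Measurable fun ω : Env d => ((ω 0).1 : Dir d → ℝ) :=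
    measurable_subtype_coe.comp (meas_eval 0)
  calc Pr ((fun ω : Env d => ω 0) ⁻¹' (Subtype.val ⁻¹' C))
      = Pr.map (fun ω : Env d => ((ω 0).1 : Dir d → ℝ)) C := (Measure.map_apply hm hC).symm
  _ = ((μT.prod (uniformSigns d)).map (fun ts => psym d ts)) C := by rw [hmap]
  _ = _ := Measure.map_apply meas_psym hC

lemma iInf_psym (hd : 0 < d) {t : ℝ} (ht : 0 < t) (ht2 : t ≤ 1/2) (s : Fin d → Bool) :
    ⨅ e : Dir d, psym d (t, s) e = t / d := by
  haveI : Nonempty (Dir d) := ⟨(⟨0, hd⟩, true)⟩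
  apply le_antisymm
  · have h1 : psym d (t, s) ((⟨0, hd⟩ : Fin d), s ⟨0, hd⟩) = t / d := by
      rw [psym]; simp
    exact (ciInf_le (Set.Finite.bddBelow (Set.finite_range _)) ((⟨0, hd⟩ : Fin d), s ⟨0, hd⟩)).trans
      (le_of_eq h1)
  · apply le_ciInf
    intro e
    rw [psym]
    split
    · exact le_rfl
    · have hd1 : (1:ℝ) ≤ (d:ℝ) := by exact_mod_cast hd
      rw [show (1:ℝ)/(d:ℝ) - t/(d:ℝ) = (1-t)/(d:ℝ) by ring]
      gcongr
      linarith

lemma sum_inDirs_psym {x : V d} (hx : x ∈ cube (0 : V d)) (t : ℝ) (hd : 0 < d) :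
    ∑ e ∈ inDirs x, psym d (t, fun i => !decide (x i = 0)) e = 1 - t := by
  rw [inDirs_eq_image hx, Finset.sum_image (fun i _ j _ h => congrArg Prod.fst h)]
  have h1 : ∀ i : Fin d,
      psym d (t, fun i => !decide (x i = 0)) (i, decide (x i = 0)) = 1/d - t/d := by
    intro i
    rw [psym, if_neg (by simp)]
  rw [Finset.sum_congr rfl (fun i _ => h1 i), Finset.sum_const, Finset.card_univ,
    Fintype.card_fin, nsmul_eq_mul]
  have hd0 : (d:ℝ) ≠ 0 := Nat.cast_ne_zero.mpr hd.ne'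
  field_simp

lemma conull_T {μT : Measure ℝ} [IsProbabilityMeasure μT]
    (hsupp : μT {t | 0 < t ∧ t ≤ 1/2} = 1) : μT {t : ℝ | 0 < t ∧ t ≤ 1/2}ᶜ = 0 := by
  have hms : MeasurableSet {t : ℝ | 0 < t ∧ t ≤ 1/2} := measurableSet_Ioc
  rw [measure_compl hms (by rw [hsupp]; exact one_ne_top), hsupp, measure_univ, tsub_self]

lemma tail_base {μT : Measure ℝ} [IsProbabilityMeasure μT]
    (hsupp : μT {t | 0 < t ∧ t ≤ 1/2} = 1) {c : ℝ}
    (htail : ∀ n : ℕ, 1 ≤ n →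
      ENNReal.ofReal (c * (n : ℝ) ^ (-(1 : ℝ) / 2 ^ d)) ≤ μT {t | (n : ℝ) ≤ t⁻¹})
    (n : ℕ) (hn : 1 ≤ n) :
    ENNReal.ofReal (c * (n : ℝ) ^ (-(1 : ℝ) / 2 ^ d))
      ≤ μT ({t : ℝ | (n : ℝ) ≤ t⁻¹} ∩ {t | 0 < t ∧ t ≤ 1/2}) := by
  rw [measure_inter_conull (conull_T hsupp)]
  exact htail n hn

lemma ofReal_pow_tail {c : ℝ} (hc : 0 ≤ c) (n : ℕ) (hn : 1 ≤ n) :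
    (ENNReal.ofReal (c * (n : ℝ) ^ (-(1 : ℝ) / 2 ^ d))) ^ (2 ^ d)
      = ENNReal.ofReal (c ^ (2 ^ d) * (n : ℝ)⁻¹) := by
  have hn0 : (0:ℝ) < n := by exact_mod_cast hn
  rw [← ENNReal.ofReal_pow (by positivity), mul_pow,
    ← Real.rpow_natCast ((n : ℝ) ^ (-(1:ℝ)/2^d)) (2^d), ← Real.rpow_mul hn0.le]
  have hexp : (-(1:ℝ)/2^d) * ((2^d : ℕ) : ℝ) = -1 := by
    push_cast
    field_simp
  rw [hexp, Real.rpow_neg_one]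

end Aux

/-- For the symmetric example environment on `ℤ^d`, `d ≥ 2`:
`𝐏[min_{x∈𝔥} 1/T^{(x)} ≥ n] = 𝐏[T⁻¹ ≥ n]^{2^d} ≥ c' n⁻¹`, and the annealed expected exit
time of the unit hypercube is infinite. -/
theorem psym_infinite_cube_exit_time
    (d : ℕ) (hd : 2 ≤ d)
    (P : Env d → V d → Measure (Traj d)) (hP : IsQuenched P)
    (Pr : Measure (Env d)) (hPr : IsPsym Pr) :
    (∀ n : ℕ, 1 ≤ n →
      Pr {ω | ∀ x ∈ cube (0 : V d), (n : ℝ) ≤ (Tval ω x)⁻¹}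
        = (Pr {ω | (n : ℝ) ≤ (Tval ω 0)⁻¹}) ^ (2 ^ d)) ∧
    (∃ c' > (0 : ℝ), ∀ n : ℕ, 1 ≤ n →
      ENNReal.ofReal (c' * (n : ℝ)⁻¹)
        ≤ Pr {ω | ∀ x ∈ cube (0 : V d), (n : ℝ) ≤ (Tval ω x)⁻¹}) ∧
    ∫⁻ X, ((exitTime (cube 0) X : ℝ≥0∞)) ∂(annealed P Pr 0) = ⊤ := by
  obtain ⟨hIID, μT, hμTprob, hsupp, ⟨c, hc, htail⟩, hmap⟩ := hPr
  haveI := hIID.1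
  haveI := hμTprob
  have hd0 : 0 < d := by omega
  have hdR : ((d : ℝ)) ≠ 0 := Nat.cast_ne_zero.mpr hd0.ne'
  -- the marginal event for T
  set CT : ℕ → Set (Dir d → ℝ) :=
    fun n => {v | (n : ℝ) ≤ ((d : ℝ) * ⨅ e : Dir d, v e)⁻¹} with hCT
  have hCTmeas : ∀ n, MeasurableSet (CT n) := by
    intro n
    have hmeas : Measurable fun v : Dir d → ℝ => ((d : ℝ) * ⨅ e : Dir d, v e)⁻¹ :=
      (measurable_const.mul (Measurable.iInf fun e => measurable_pi_apply e)).inv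
    exact hmeas measurableSet_Ici
  set BT : ℕ → Set (ProbVec d) := fun n => Subtype.val ⁻¹' CT n with hBT
  have hBTmeas : ∀ n, MeasurableSet (BT n) := fun n => measurable_subtype_coe (hCTmeas n)
  have hev : ∀ n : ℕ, {ω : Env d | ∀ x ∈ cube (0 : V d), (n : ℝ) ≤ (Tval ω x)⁻¹}
      = ⋂ x ∈ cubePts d, (fun ω : Env d => ω x) ⁻¹' BT n := by
    intro n
    ext ω
    simp only [Set.mem_setOf_eq, Set.mem_iInter, Set.mem_preimage]
    constructor
    · intro h x hx
      exact h x (by rw [← coe_cubePts]; exact hx)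
    · intro h x hx
      exact h x (by rwa [← Finset.mem_coe, coe_cubePts])
  have hev0 : ∀ n : ℕ, {ω : Env d | (n : ℝ) ≤ (Tval ω 0)⁻¹}
      = (fun ω : Env d => ω 0) ⁻¹' BT n := fun n => rfl
  have hpart1 : ∀ n : ℕ, 1 ≤ n →
      Pr {ω | ∀ x ∈ cube (0 : V d), (n : ℝ) ≤ (Tval ω x)⁻¹}
        = (Pr {ω | (n : ℝ) ≤ (Tval ω 0)⁻¹}) ^ (2 ^ d) := by
    intro n _
    rw [hev n, hev0 n, indep_prod hIID _ (fun x => hBTmeas n),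
      Finset.prod_congr rfl (fun x _ => marginal_eq hIID x (hBTmeas n)),
      Finset.prod_const, card_cubePts]
  have hT0 : ∀ n : ℕ, 1 ≤ n →
      ENNReal.ofReal (c * (n : ℝ) ^ (-(1 : ℝ) / 2 ^ d))
        ≤ Pr ((fun ω : Env d => ω 0) ⁻¹' BT n) := by
    intro n hn
    rw [hBT]
    rw [marginal_val hmap (hCTmeas n)]
    have hsub : ({t : ℝ | (n : ℝ) ≤ t⁻¹} ∩ {t | 0 < t ∧ t ≤ 1/2}) ×ˢ
        (Set.univ : Set (Fin d → Bool)) ⊆ psym d ⁻¹' CT n := by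
      rintro ⟨t, sb⟩ ⟨⟨htn, ht0, ht2⟩, -⟩
      show (n : ℝ) ≤ ((d : ℝ) * ⨅ e : Dir d, psym d (t, sb) e)⁻¹
      rw [iInf_psym hd0 ht0 ht2 sb]
      have hdt : (d : ℝ) * (t / d) = t := by field_simp
      rw [hdt]
      exact htn
    calc ENNReal.ofReal (c * (n : ℝ) ^ (-(1 : ℝ) / 2 ^ d))
        ≤ μT ({t : ℝ | (n : ℝ) ≤ t⁻¹} ∩ {t | 0 < t ∧ t ≤ 1/2}) := tail_base hsupp htail n hn
    _ = (μT.prod (uniformSigns d))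
        (({t : ℝ | (n : ℝ) ≤ t⁻¹} ∩ {t | 0 < t ∧ t ≤ 1/2}) ×ˢ Set.univ) := by
        rw [Measure.prod_prod, measure_univ, mul_one]
    _ ≤ _ := measure_mono hsub
  refine ⟨hpart1, ⟨c ^ (2 ^ d), by positivity, fun n hn => ?_⟩, ?_⟩
  · rw [hpart1 n hn, hev0 n]
    calc ENNReal.ofReal (c ^ (2 ^ d) * (n : ℝ)⁻¹)
        = (ENNReal.ofReal (c * (n : ℝ) ^ (-(1 : ℝ) / 2 ^ d))) ^ (2 ^ d) :=
          (ofReal_pow_tail hc.le n hn).symm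
    _ ≤ (Pr ((fun ω : Env d => ω 0) ⁻¹' BT n)) ^ (2 ^ d) :=
          pow_le_pow_left₀ (zero_le) (hT0 n hn) _
  · -- Part 3: infinite annealed expected exit time
    have hbind : ∀ s : Set (Traj d), MeasurableSet s →
        annealed P Pr 0 s = ∫⁻ ω, P ω 0 s ∂Pr :=
      fun s hs => Measure.bind_apply hs (hP.2.1 0).aemeasurable
    set CQ : V d → ℕ → Set (Dir d → ℝ) :=
      fun x m => {v | 1 - ((m : ℝ) + 1)⁻¹ ≤ ∑ e ∈ inDirs x, v e} with hCQ
    have hCQmeas : ∀ x m, MeasurableSet (CQ x m) := by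
      intro x m
      have hmeas : Measurable fun v : Dir d → ℝ => ∑ e ∈ inDirs x, v e :=
        Finset.measurable_sum _ (fun e _ => measurable_pi_apply e)
      exact hmeas measurableSet_Ici
    set BQ : V d → ℕ → Set (ProbVec d) := fun x m => Subtype.val ⁻¹' CQ x m with hBQ
    have hBQmeas : ∀ x m, MeasurableSet (BQ x m) :=
      fun x m => measurable_subtype_coe (hCQmeas x m)
    set A : ℕ → Set (Env d) :=
      fun m => ⋂ x ∈ cubePts d, (fun ω : Env d => ω x) ⁻¹' BQ x m with hA
    have hAmeas : ∀ m, MeasurableSet (A m) := fun m =>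
      MeasurableSet.iInter fun x => MeasurableSet.iInter fun _ => meas_eval x (hBQmeas x m)
    have hAq : ∀ m (ω : Env d), ω ∈ A m →
        ∀ x ∈ cube (0 : V d), 1 - ((m : ℝ) + 1)⁻¹ ≤ ∑ e ∈ inDirs x, pmf ω x e := by
      intro m ω hω x hx
      exact Set.mem_iInter₂.mp hω x (by rwa [← Finset.mem_coe, coe_cubePts])
    have hAf : ∀ m (ω : Env d), ω ∈ A m →
        ((m : ℝ≥0∞) + 1) ≤ ∑' n : ℕ, ENNReal.ofReal (stayProb ω n 0) := by
      intro m ω hω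
      set r : ℝ := 1 - ((m : ℝ) + 1)⁻¹ with hr
      have hminv1 : ((m : ℝ) + 1)⁻¹ ≤ 1 := by
        rw [inv_le_one_iff₀]
        right
        linarith [Nat.cast_nonneg (α := ℝ) m]
      have hr0 : 0 ≤ r := by rw [hr]; linarith
      have hsp : ∀ n : ℕ, ENNReal.ofReal (r ^ n) ≤ ENNReal.ofReal (stayProb ω n 0) :=
        fun n => ENNReal.ofReal_le_ofReal
          (le_stayProb ω hr0 (hAq m ω hω) n 0 zero_mem_cube)
      have hofr : ENNReal.ofReal (((m : ℝ) + 1)⁻¹) = 1 - ENNReal.ofReal r := by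
        rw [hr, ENNReal.ofReal_sub _ (by positivity), ENNReal.ofReal_one,
          ENNReal.sub_sub_cancel one_ne_top
            (by rw [← ENNReal.ofReal_one]; exact ENNReal.ofReal_le_ofReal hminv1)]
      calc ((m : ℝ≥0∞) + 1) = (ENNReal.ofReal (((m : ℝ) + 1)⁻¹))⁻¹ := by
            rw [ENNReal.ofReal_inv_of_pos (by positivity), inv_inv]
            rw [show ((m : ℝ) + 1) = (((m + 1 : ℕ) : ℝ)) by push_cast; ring,
              ENNReal.ofReal_natCast]
            push_cast
            ring
      _ = (1 - ENNReal.ofReal r)⁻¹ := by rw [hofr]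
      _ = ∑' n : ℕ, (ENNReal.ofReal r) ^ n := (ENNReal.tsum_geometric _).symm
      _ = ∑' n : ℕ, ENNReal.ofReal (r ^ n) := by
            refine tsum_congr fun n => ?_
            rw [ENNReal.ofReal_pow hr0]
      _ ≤ _ := ENNReal.tsum_le_tsum hsp
    set K : ℝ≥0∞ := (ENNReal.ofReal c * (2 ^ d : ℝ≥0∞)⁻¹) ^ (2 ^ d) with hK
    have hKne : K ≠ 0 := by
      apply pow_ne_zero
      exact mul_ne_zero (by simp [ENNReal.ofReal_pos.mpr hc, ne_of_gt])
        (ENNReal.inv_ne_zero.mpr two_pow_ne_top)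
    have hAlow : ∀ m : ℕ, K * ENNReal.ofReal ((m : ℝ) + 1)⁻¹ ≤ Pr (A m) := by
      intro m
      have hm1 : ((m + 1 : ℕ) : ℝ) = (m : ℝ) + 1 := by push_cast; ring
      have hfac : ∀ x ∈ cubePts d,
          ENNReal.ofReal (c * ((m + 1 : ℕ) : ℝ) ^ (-(1 : ℝ) / 2 ^ d)) * (2 ^ d : ℝ≥0∞)⁻¹
            ≤ Pr ((fun ω : Env d => ω x) ⁻¹' BQ x m) := by
        intro x hx
        have hxc : x ∈ cube (0 : V d) := by rwa [← Finset.mem_coe, coe_cubePts] at hx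
        rw [marginal_eq hIID x (hBQmeas x m), hBQ, marginal_val hmap (hCQmeas x m)]
        have hsub : ({t : ℝ | ((m + 1 : ℕ) : ℝ) ≤ t⁻¹} ∩ {t | 0 < t ∧ t ≤ 1/2}) ×ˢ
            ({fun i => !decide (x i = 0)} : Set (Fin d → Bool)) ⊆ psym d ⁻¹' CQ x m := by
          rintro ⟨t, sb⟩ ⟨⟨htn, ht0, ht2⟩, hsb⟩
          rw [Set.mem_singleton_iff] at hsb
          have hsb' : sb = fun i => !decide (x i = 0) := hsb
          subst hsb'
          show 1 - ((m : ℝ) + 1)⁻¹ ≤ ∑ e ∈ inDirs x, psym d (t, fun i => !decide (x i = 0)) e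
          rw [sum_inDirs_psym hxc t hd0]
          have hmpos : (0 : ℝ) < (m : ℝ) + 1 := by positivity
          have ht1 : t ≤ ((m : ℝ) + 1)⁻¹ := by
            rw [hm1] at htn
            calc t = (t⁻¹)⁻¹ := (inv_inv t).symm
            _ ≤ ((m : ℝ) + 1)⁻¹ := by
                apply inv_anti₀ hmpos htn
          linarith
        calc ENNReal.ofReal (c * ((m + 1 : ℕ) : ℝ) ^ (-(1 : ℝ) / 2 ^ d)) * (2 ^ d : ℝ≥0∞)⁻¹
            ≤ μT ({t : ℝ | ((m + 1 : ℕ) : ℝ) ≤ t⁻¹} ∩ {t | 0 < t ∧ t ≤ 1/2})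
              * (2 ^ d : ℝ≥0∞)⁻¹ :=
              mul_le_mul_left (tail_base hsupp htail (m + 1) (by omega)) _
        _ = (μT.prod (uniformSigns d))
              (({t : ℝ | ((m + 1 : ℕ) : ℝ) ≤ t⁻¹} ∩ {t | 0 < t ∧ t ≤ 1/2}) ×ˢ
                ({fun i => !decide (x i = 0)} : Set (Fin d → Bool))) := by
              rw [Measure.prod_prod, us_singleton]
        _ ≤ _ := measure_mono hsub
      rw [hA, indep_prod hIID _ (fun x => hBQmeas x m)]
      calc K * ENNReal.ofReal ((m : ℝ) + 1)⁻¹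
          = (ENNReal.ofReal (c * ((m + 1 : ℕ) : ℝ) ^ (-(1 : ℝ) / 2 ^ d))
              * (2 ^ d : ℝ≥0∞)⁻¹) ^ (2 ^ d) := by
            rw [mul_pow, ofReal_pow_tail hc.le (m + 1) (by omega), hK, mul_pow, hm1,
              ENNReal.ofReal_mul (by positivity), ENNReal.ofReal_pow hc.le]
            ring
      _ = ∏ _x ∈ cubePts d, (ENNReal.ofReal (c * ((m + 1 : ℕ) : ℝ) ^ (-(1 : ℝ) / 2 ^ d))
              * (2 ^ d : ℝ≥0∞)⁻¹) := by rw [Finset.prod_const, card_cubePts]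
      _ ≤ ∏ x ∈ cubePts d, Pr ((fun ω : Env d => ω x) ⁻¹' BQ x m) :=
            Finset.prod_le_prod' hfac
    have hPmeas : ∀ n : ℕ, AEMeasurable (fun ω : Env d => P ω 0 (stay d n)) Pr :=
      fun n => ((Measure.measurable_coe (measurableSet_stay n)).comp (hP.2.1 0)).aemeasurable
    refine top_le_iff.mp ?_
    calc (⊤ : ℝ≥0∞) = K * ∑' m : ℕ, ENNReal.ofReal ((m + 1 : ℝ))⁻¹ := by
          rw [tsum_inv_succ_eq_top, ENNReal.mul_top hKne]
    _ = ∑' m : ℕ, K * ENNReal.ofReal ((m : ℝ) + 1)⁻¹ := by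
          rw [ENNReal.tsum_mul_left]
    _ ≤ ∑' m : ℕ, Pr (A m) := ENNReal.tsum_le_tsum hAlow
    _ = ∫⁻ ω, ∑' m : ℕ, (A m).indicator (1 : Env d → ℝ≥0∞) ω ∂Pr := by
          rw [lintegral_tsum
            (fun m => (measurable_one.indicator (hAmeas m)).aemeasurable)]
          exact tsum_congr fun m => (lintegral_indicator_one (hAmeas m)).symm
    _ ≤ ∫⁻ ω, ∑' n : ℕ, ENNReal.ofReal (stayProb ω n 0) ∂Pr := by
          apply lintegral_mono
          intro ω
          have := tsum_ite_le (∑' n : ℕ, ENNReal.ofReal (stayProb ω n 0))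
            (fun m => ω ∈ A m) (fun m hm => hAf m ω hm)
          simpa [Set.indicator_apply] using this
    _ ≤ ∫⁻ ω, ∑' n : ℕ, P ω 0 (stay d n) ∂Pr :=
          lintegral_mono fun ω => ENNReal.tsum_le_tsum fun n =>
            quenched_stay hP ω n zero_mem_cube
    _ = ∑' n : ℕ, ∫⁻ ω, P ω 0 (stay d n) ∂Pr := lintegral_tsum hPmeas
    _ = ∑' n : ℕ, annealed P Pr 0 (stay d n) :=
          tsum_congr fun n => (hbind _ (measurableSet_stay n)).symm
    _ = ∫⁻ X, ∑' n : ℕ, (stay d n).indicator (1 : Traj d → ℝ≥0∞) X ∂(annealed P Pr 0) := by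
          rw [lintegral_tsum
            (fun n => (measurable_one.indicator (measurableSet_stay n)).aemeasurable)]
          exact tsum_congr fun n => (lintegral_indicator_one (measurableSet_stay n)).symm
    _ ≤ ∫⁻ X, ((exitTime (cube 0) X : ℝ≥0∞)) ∂(annealed P Pr 0) := by
          apply lintegral_mono
          intro X
          have := stay_le_exit (d := d) X
          simpa [Set.indicator_apply] using this

end RWRE
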